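/- arXiv:2110.12603 — 2 statements merged into one kernel-verified Lean document; each statement's English description precedes it below -/
import Mathlib

section
/- Let Ω be a finite probability space, H a finite set with distribution P(·) on H, and let Q^S : H × Γ → ℝ (supervisor's Q) and Q : Γ → ℝ (coordinator's Q) satisfy Q(γ) = ∑_{h∈H} P(h) Q^S(h, γ) for all γ in a finite set Γ. Fix h₁, h₂ ∈ H with P(h₁), P(h₂) > 0, fix γ* ∈ argmax_γ Q(γ), and let υ₁ = Q^S(h₁, γ*), υ₂ = Q^S(h₂, γ*). Suppose there exist γ', γ'' ∈ Γ and B ≥ 0 such that: Q^S(h, γ') = Q^S(h, γ*) for all h ≠ h₂, Q^S(h₂, γ') ≥ Q^S(h₁, γ') − B and Q^S(h₁, γ') = υ₁; symmetrically Q^S(h, γ'') = Q^S(h, γ*) for all h ≠ h₁, Q^S(h₁, γ'') ≥ Q^S(h₂, γ'') − B and Q^S(h₂, γ'') = υ₂. Then |υ₁ − υ₂| ≤ B. -/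
theorem stmt_9 {H Γ : Type*} [Fintype H] [Fintype Γ] [DecidableEq H]
    (P : H → ℝ) (hPnn : ∀ h, 0 ≤ P h) (hP1 : ∑ h, P h = 1)
    (QS : H → Γ → ℝ) (Q : Γ → ℝ)
    (hQ : ∀ γ, Q γ = ∑ h, P h * QS h γ)
    (h₁ h₂ : H) (hP₁pos : 0 < P h₁) (hP₂pos : 0 < P h₂)
    (γstar : Γ) (hopt : ∀ γ, Q γ ≤ Q γstar)
    (υ₁ υ₂ : ℝ) (hυ₁ : υ₁ = QS h₁ γstar) (hυ₂ : υ₂ = QS h₂ γstar)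
    (B : ℝ) (hB : 0 ≤ B)
    (γ' γ'' : Γ)
    (hγ'eq : ∀ h, h ≠ h₂ → QS h γ' = QS h γstar)
    (hγ'ge : QS h₂ γ' ≥ QS h₁ γ' - B)
    (hγ'h₁ : QS h₁ γ' = υ₁)
    (hγ''eq : ∀ h, h ≠ h₁ → QS h γ'' = QS h γstar)
    (hγ''ge : QS h₁ γ'' ≥ QS h₂ γ'' - B)
    (hγ''h₂ : QS h₂ γ'' = υ₂) :
    |υ₁ - υ₂| ≤ B := by
  by_cases heq : h₁ = h₂
  · subst heq
    rw [hυ₁, hυ₂, sub_self, abs_zero]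
    exact hB
  have key : ∀ (γ : Γ) (h0 : H), 0 < P h0 → (∀ h, h ≠ h0 → QS h γ = QS h γstar) →
      QS h0 γ ≤ QS h0 γstar := by
    intro γ h0 hpos hgam
    have hle := hopt γ
    rw [hQ, hQ] at hle
    have hdiff : ∑ h, P h * QS h γ - ∑ h, P h * QS h γstar
        = P h0 * (QS h0 γ - QS h0 γstar) := by
      rw [← Finset.sum_sub_distrib]
      rw [Finset.sum_eq_single h0]
      · ring
      · intro b _ hb
        rw [hgam b hb]; ring
      · intro hb; exact absurd (Finset.mem_univ h0) hb
    have : P h0 * (QS h0 γ - QS h0 γstar) ≤ 0 := by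
      rw [← hdiff]; linarith
    nlinarith [hpos]
  have k1 := key γ' h₂ hP₂pos hγ'eq
  have k2 := key γ'' h₁ hP₁pos hγ''eq
  rw [abs_sub_le_iff]
  constructor <;> [linarith [hγ'ge]; linarith [hγ''ge]]
end

section
/- Let S be a finite set, H₁, H₂, Z finite sets, with joint distributions such that: (a) for all h⁰, h^n, z^{-n}: P(z^{-n} | h^0, h^n) = P(z^{-n} | h^0, z^n) where z^n = ϑ(h^0, h^n) [consistency (SPI4)]; and (b) for all full histories: E[R(S, a) | h^0, h^{1:N}] = E[R(S, a) | h^0, z^{1:N}] where z^{1:N} is the compression of h^{1:N} [(SPS2) with zero error]. Then for every agent n and every h^0, h^n, a: E[R(S, a) | h^0, h^n] = E[R(S, a) | h^0, z^n], i.e., condition (SPI2) holds. -/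
/-- Conditional expectation of `f` given the event `A` in a finite probability
space with weight function `p`. -/
noncomputable def cexp {Ω : Type*} [Fintype Ω] (p : Ω → ℝ)
    (A : Ω → Prop) [DecidablePred A] (f : Ω → ℝ) : ℝ :=
  (∑ ω ∈ Finset.univ.filter (fun ω => A ω), p ω * f ω) /
    (∑ ω ∈ Finset.univ.filter (fun ω => A ω), p ω)

open Finset in
lemma sum_mul_eq_cexp_mul {Ω : Type*} [Fintype Ω] (p : Ω → ℝ)
    (hpnn : ∀ ω, 0 ≤ p ω) (A : Ω → Prop) [DecidablePred A] (f : Ω → ℝ) :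
    ∑ ω ∈ Finset.univ.filter (fun ω => A ω), p ω * f ω
      = cexp p A f * ∑ ω ∈ Finset.univ.filter (fun ω => A ω), p ω := by
  by_cases h : ∑ ω ∈ Finset.univ.filter (fun ω => A ω), p ω = 0
  · have hz : ∀ ω ∈ Finset.univ.filter (fun ω => A ω), p ω = 0 :=
      (Finset.sum_eq_zero_iff_of_nonneg (fun ω _ => hpnn ω)).1 h
    rw [h, mul_zero]
    exact Finset.sum_eq_zero fun ω hω => by rw [hz ω hω, zero_mul]
  · rw [cexp, div_mul_cancel₀ _ h]

/-- (SPS2) with zero error and the consistency condition (SPI4) imply (SPI2). -/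
theorem stmt_15 {Ω S A H0T HnT HmT ZnT ZmT : Type*}
    [Fintype Ω] [Fintype S] [Fintype A]
    [DecidableEq H0T] [DecidableEq HnT] [DecidableEq HmT]
    [DecidableEq ZnT] [DecidableEq ZmT]
    (p : Ω → ℝ) (hpnn : ∀ ω, 0 ≤ p ω) (hp1 : ∑ ω, p ω = 1)
    (Sv : Ω → S) (H0v : Ω → H0T) (Hnv : Ω → HnT) (Hmv : Ω → HmT)
    (ϑn : H0T → HnT → ZnT) (ϑm : H0T → HmT → ZmT)
    (Znv : Ω → ZnT) (hZn : ∀ ω, Znv ω = ϑn (H0v ω) (Hnv ω))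
    (Zmv : Ω → ZmT) (hZm : ∀ ω, Zmv ω = ϑm (H0v ω) (Hmv ω))
    (R : S → A → ℝ) (a : A)
    -- (SPI4): the conditional law of the other agents' compressed states
    -- given (h⁰, hⁿ) depends on hⁿ only through its compression zⁿ
    (hSPI4 : ∀ (h0 : H0T) (hn : HnT) (zm : ZmT),
      cexp p (fun ω => H0v ω = h0 ∧ Hnv ω = hn)
          (fun ω => if Zmv ω = zm then 1 else 0)
        = cexp p (fun ω => H0v ω = h0 ∧ Znv ω = ϑn h0 hn)
          (fun ω => if Zmv ω = zm then 1 else 0))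
    -- (SPS2) with zero error: the expected reward given the full histories
    -- equals that given the compressed private states
    (hSPS2 : ∀ (h0 : H0T) (hn : HnT) (hm : HmT),
      cexp p (fun ω => H0v ω = h0 ∧ Hnv ω = hn ∧ Hmv ω = hm)
          (fun ω => R (Sv ω) a)
        = cexp p (fun ω => H0v ω = h0 ∧ Znv ω = ϑn h0 hn ∧ Zmv ω = ϑm h0 hm)
          (fun ω => R (Sv ω) a)) :
    -- (SPI2): the expected reward given (h⁰, hⁿ) equals that given (h⁰, zⁿ)
    ∀ (h0 : H0T) (hn : HnT),
      cexp p (fun ω => H0v ω = h0 ∧ Hnv ω = hn) (fun ω => R (Sv ω) a)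
        = cexp p (fun ω => H0v ω = h0 ∧ Znv ω = ϑn h0 hn)
          (fun ω => R (Sv ω) a) := by
  classical
  intro h0 hn
  open Finset in
  set s1 : Finset Ω := Finset.univ.filter (fun ω => H0v ω = h0 ∧ Hnv ω = hn) with hs1
  set s2 : Finset Ω := Finset.univ.filter
    (fun ω => H0v ω = h0 ∧ Znv ω = ϑn h0 hn) with hs2
  set c : ZmT → ℝ := fun zm =>
    cexp p (fun ω => H0v ω = h0 ∧ Znv ω = ϑn h0 hn ∧ Zmv ω = zm)
      (fun ω => R (Sv ω) a) with hc
  -- indicator sums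
  have hind : ∀ (zm : ZmT) (s : Finset Ω),
      ∑ ω ∈ s, p ω * (if Zmv ω = zm then (1:ℝ) else 0)
        = ∑ ω ∈ s.filter (fun ω => Zmv ω = zm), p ω := by
    intro zm s
    rw [Finset.sum_filter]
    refine Finset.sum_congr rfl fun ω _ => ?_
    by_cases h : Zmv ω = zm <;> simp [h]
  -- Claim 3 : SPI4 in sum form
  have claim3 : ∀ zm : ZmT,
      (∑ ω ∈ s1.filter (fun ω => Zmv ω = zm), p ω) / (∑ ω ∈ s1, p ω)
        = (∑ ω ∈ s2.filter (fun ω => Zmv ω = zm), p ω) / (∑ ω ∈ s2, p ω) := by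
    intro zm
    have := hSPI4 h0 hn zm
    rw [cexp, cexp, hind zm, hind zm] at this
    exact this
  -- Claim 1
  have claim1 : ∑ ω ∈ s1, p ω * R (Sv ω) a = ∑ ω ∈ s1, p ω * c (Zmv ω) := by
    rw [← Finset.sum_fiberwise_of_maps_to (g := Hmv) (t := Finset.univ.image Hmv)
          (fun ω _ => Finset.mem_image_of_mem _ (Finset.mem_univ ω)) (fun ω => p ω * R (Sv ω) a),
        ← Finset.sum_fiberwise_of_maps_to (g := Hmv) (t := Finset.univ.image Hmv)
          (fun ω _ => Finset.mem_image_of_mem _ (Finset.mem_univ ω)) (fun ω => p ω * c (Zmv ω))]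
    refine Finset.sum_congr rfl fun hm _ => ?_
    have hset : s1.filter (fun ω => Hmv ω = hm)
        = Finset.univ.filter (fun ω => H0v ω = h0 ∧ Hnv ω = hn ∧ Hmv ω = hm) := by
      ext ω; simp [hs1, and_assoc]
    rw [hset, sum_mul_eq_cexp_mul p hpnn _ (fun ω => R (Sv ω) a), hSPS2 h0 hn hm]
    have hval : ∀ ω ∈ Finset.univ.filter (fun ω => H0v ω = h0 ∧ Hnv ω = hn ∧ Hmv ω = hm),
        p ω * c (Zmv ω) = p ω * c (ϑm h0 hm) := by
      intro ω hω
      simp only [Finset.mem_filter] at hω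
      rw [hZm, hω.2.1, hω.2.2.2]
    rw [Finset.sum_congr rfl hval, ← Finset.sum_mul, mul_comm]
  -- Claim 2
  have claim2 : ∑ ω ∈ s2, p ω * R (Sv ω) a = ∑ ω ∈ s2, p ω * c (Zmv ω) := by
    rw [← Finset.sum_fiberwise_of_maps_to (g := Zmv) (t := Finset.univ.image Zmv)
          (fun ω _ => Finset.mem_image_of_mem _ (Finset.mem_univ ω)) (fun ω => p ω * R (Sv ω) a),
        ← Finset.sum_fiberwise_of_maps_to (g := Zmv) (t := Finset.univ.image Zmv)
          (fun ω _ => Finset.mem_image_of_mem _ (Finset.mem_univ ω)) (fun ω => p ω * c (Zmv ω))]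
    refine Finset.sum_congr rfl fun zm _ => ?_
    have hset : s2.filter (fun ω => Zmv ω = zm)
        = Finset.univ.filter (fun ω => H0v ω = h0 ∧ Znv ω = ϑn h0 hn ∧ Zmv ω = zm) := by
      ext ω; simp [hs2, and_assoc]
    rw [hset, sum_mul_eq_cexp_mul p hpnn _ (fun ω => R (Sv ω) a)]
    have hval : ∀ ω ∈ Finset.univ.filter (fun ω => H0v ω = h0 ∧ Znv ω = ϑn h0 hn ∧ Zmv ω = zm),
        p ω * c (Zmv ω) = p ω * c zm := by
      intro ω hω
      simp only [Finset.mem_filter] at hω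
      rw [hω.2.2.2]
    rw [Finset.sum_congr rfl hval, ← Finset.sum_mul, mul_comm]
  -- expand : sum of p * c (Zmv ω) fiberwise
  have expand : ∀ (s : Finset Ω), (∑ ω ∈ s, p ω * c (Zmv ω))
      = ∑ zm ∈ Finset.univ.image Zmv,
          c zm * ∑ ω ∈ s.filter (fun ω => Zmv ω = zm), p ω := by
    intro s
    rw [← Finset.sum_fiberwise_of_maps_to (g := Zmv) (t := Finset.univ.image Zmv)
          (fun ω _ => Finset.mem_image_of_mem _ (Finset.mem_univ ω)) (fun ω => p ω * c (Zmv ω))]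
    refine Finset.sum_congr rfl fun zm _ => ?_
    rw [Finset.mul_sum]
    refine Finset.sum_congr rfl fun ω hω => ?_
    simp only [Finset.mem_filter] at hω
    rw [hω.2, mul_comm]
  show (∑ ω ∈ s1, p ω * R (Sv ω) a) / (∑ ω ∈ s1, p ω)
      = (∑ ω ∈ s2, p ω * R (Sv ω) a) / (∑ ω ∈ s2, p ω)
  rw [claim1, claim2, expand s1, expand s2, Finset.sum_div, Finset.sum_div]
  refine Finset.sum_congr rfl fun zm _ => ?_
  rw [mul_div_assoc, mul_div_assoc, claim3 zm]
end
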